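/- Define R(s) = (s−2)² − 4(1−s)^{1/2}(1−κ s)^{1/2} for 0 < κ < 1. Then R has a unique root s₀ in the open interval (0,1), and this root is simple (R'(s₀) ≠ 0). -/

import Mathlib

private lemma rayleigh_g_ne (s : ℝ) (h0 : 0 < s) (h1 : s < 1) :
    2*s^3 - 11*s^2 + 16*s - 8 ≠ 0 := by
  intro h
  nlinarith [mul_nonpos_of_nonneg_of_nonpos (sq_nonneg (s-1)) (by linarith : 2*s-7 ≤ 0)]

private lemma rayleigh_Q_uniq (κ s₁ s₂ : ℝ)
    (h10 : 0 < s₁) (h11 : s₁ < 1) (h20 : 0 < s₂) (h21 : s₂ < 1) (hlt : s₁ < s₂)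
    (e₁ : s₁^3 - 8*s₁^2 + (24-16*κ)*s₁ - 16 + 16*κ = 0)
    (e₂ : s₂^3 - 8*s₂^2 + (24-16*κ)*s₂ - 16 + 16*κ = 0) : False := by
  have hd : s₂ - s₁ ≠ 0 := by linarith
  have hA : s₁^2 + s₁*s₂ + s₂^2 - 8*(s₁+s₂) + 24 - 16*κ = 0 := by
    have h : (s₂ - s₁) * (s₁^2 + s₁*s₂ + s₂^2 - 8*(s₁+s₂) + 24 - 16*κ) = 0 := by
      linear_combination e₂ - e₁
    exact (mul_eq_zero.1 h).resolve_left hd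
  have key : (1-s₁)*(1-s₂)*(7-s₁-s₂) + 1 = 0 := by
    linear_combination e₁ + (1-s₁)*hA
  nlinarith [mul_pos (mul_pos (by linarith : (0:ℝ) < 1-s₁)
    (by linarith : (0:ℝ) < 1-s₂)) (by linarith : (0:ℝ) < 7-s₁-s₂)]

private lemma rayleigh_R_to_Q (κ s : ℝ) (h0 : 0 < s) (h1 : s < 1) (hks : 0 < 1 - κ * s)
    (hR : (s - 2) ^ 2 - 4 * Real.sqrt (1 - s) * Real.sqrt (1 - κ * s) = 0) :
    s^3 - 8*s^2 + (24-16*κ)*s - 16 + 16*κ = 0 := by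
  set a := Real.sqrt (1 - s) with hadef
  set b := Real.sqrt (1 - κ*s) with hbdef
  have ha : a^2 = 1 - s := Real.sq_sqrt (by linarith)
  have hb : b^2 = 1 - κ*s := Real.sq_sqrt (by linarith)
  have hP : s * (s^3 - 8*s^2 + (24-16*κ)*s - 16 + 16*κ) = 0 := by
    linear_combination ((s-2)^2 + 4*a*b) * hR + 16*b^2*ha + 16*(1-s)*hb
  exact (mul_eq_zero.1 hP).resolve_left (ne_of_gt h0)

private lemma rayleigh_Q_to_R (κ s : ℝ) (h0 : 0 < s) (h1 : s < 1) (hks : 0 < 1 - κ * s)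
    (hQ : s^3 - 8*s^2 + (24-16*κ)*s - 16 + 16*κ = 0) :
    (s - 2) ^ 2 - 4 * Real.sqrt (1 - s) * Real.sqrt (1 - κ * s) = 0 := by
  set a := Real.sqrt (1 - s) with hadef
  set b := Real.sqrt (1 - κ*s) with hbdef
  have ha : a^2 = 1 - s := Real.sq_sqrt (by linarith)
  have hb : b^2 = 1 - κ*s := Real.sq_sqrt (by linarith)
  have ha0 : 0 ≤ a := Real.sqrt_nonneg _
  have hb0 : 0 ≤ b := Real.sqrt_nonneg _
  have hsq : ((s-2)^2)^2 = (4*a*b)^2 := by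
    linear_combination s * hQ - 16*b^2*ha - 16*(1-s)*hb
  have : (s-2)^2 = 4*a*b := by
    nlinarith [sq_nonneg ((s-2)^2 - 4*a*b), sq_nonneg ((s-2)^2 + 4*a*b), sq_nonneg (s-2),
      mul_nonneg ha0 hb0]
  linarith

private lemma rayleigh_deriv_ne (κ s : ℝ) (hκ0 : 0 < κ) (h0 : 0 < s) (h1 : s < 1)
    (hks : 0 < 1 - κ * s)
    (hR : (s - 2) ^ 2 - 4 * Real.sqrt (1 - s) * Real.sqrt (1 - κ * s) = 0) :
    deriv (fun s => (s - 2) ^ 2 - 4 * Real.sqrt (1 - s) * Real.sqrt (1 - κ * s)) s ≠ 0 := by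
  have hQ := rayleigh_R_to_Q κ s h0 h1 hks hR
  set a := Real.sqrt (1 - s) with hadef
  set b := Real.sqrt (1 - κ*s) with hbdef
  have ha : a^2 = 1 - s := Real.sq_sqrt (by linarith)
  have hb : b^2 = 1 - κ*s := Real.sq_sqrt (by linarith)
  have ha0 : 0 < a := Real.sqrt_pos.2 (by linarith)
  have hb0 : 0 < b := Real.sqrt_pos.2 (by linarith)
  have hda : HasDerivAt (fun x => Real.sqrt (1 - x)) (1/(2*a) * (-1)) s := by
    have h1' : HasDerivAt (fun x : ℝ => 1 - x) (-1) s := by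
      simpa using (hasDerivAt_id s).const_sub 1
    exact (Real.hasDerivAt_sqrt (by nlinarith)).comp s h1'
  have hdb : HasDerivAt (fun x => Real.sqrt (1 - κ*x)) (1/(2*b) * (-κ)) s := by
    have h1' : HasDerivAt (fun x : ℝ => 1 - κ*x) (-κ) s := by
      simpa using ((hasDerivAt_id s).const_mul κ).const_sub 1
    exact (Real.hasDerivAt_sqrt (by nlinarith)).comp s h1'
  have hd2 : HasDerivAt (fun x : ℝ => (x - 2)^2) (2*(s-2)) s := by
    simpa using ((hasDerivAt_id s).sub_const 2).fun_pow 2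
  have hdR : HasDerivAt (fun s => (s - 2) ^ 2 - 4 * Real.sqrt (1 - s) * Real.sqrt (1 - κ * s))
      (2*(s-2) - ((4 * (1/(2*a) * (-1))) * b + (4 * a) * (1/(2*b) * (-κ)))) s :=
    hd2.sub ((hda.const_mul 4).mul hdb)
  rw [hdR.deriv]
  intro hzero
  have hab : 4*a*b = (s-2)^2 := by linarith
  have hE2 : (s-2)^3 + 4*(1 + κ - 2*κ*s) = 0 := by
    field_simp at hzero
    nlinarith [hzero, ha, hb, hab, mul_pos ha0 hb0]
  have hg : s * (2*s^3 - 11*s^2 + 16*s - 8) = 0 := by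
    linear_combination (1-2*s)*hQ - 4*(1-s)*hE2
  exact rayleigh_g_ne s h0 h1 ((mul_eq_zero.1 hg).resolve_left (ne_of_gt h0))

/-- The Rayleigh function `R(s) = (s−2)² − 4√(1−s)√(1−κs)`, `0 < κ < 1`, has a
unique root `s₀` in `(0,1)`, and this root is simple. -/
theorem stmt_7 (κ : ℝ) (hκ0 : 0 < κ) (hκ1 : κ < 1) :
    let R : ℝ → ℝ := fun s =>
      (s - 2) ^ 2 - 4 * Real.sqrt (1 - s) * Real.sqrt (1 - κ * s)
    (∃! s₀ : ℝ, s₀ ∈ Set.Ioo (0 : ℝ) 1 ∧ R s₀ = 0) ∧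
    (∀ s₀ ∈ Set.Ioo (0 : ℝ) 1, R s₀ = 0 → deriv R s₀ ≠ 0) := by
  intro R
  have hks : ∀ s : ℝ, 0 < s → s < 1 → 0 < 1 - κ * s := by
    intro s h0 h1; nlinarith
  constructor
  · -- existence via IVT on Q, uniqueness via rayleigh_Q_uniq
    have hQcont : Continuous (fun s : ℝ => s^3 - 8*s^2 + (24-16*κ)*s - 16 + 16*κ) := by
      continuity
    have hmem : (0:ℝ) ∈ Set.Ioo ((fun s : ℝ => s^3 - 8*s^2 + (24-16*κ)*s - 16 + 16*κ) 0)
        ((fun s : ℝ => s^3 - 8*s^2 + (24-16*κ)*s - 16 + 16*κ) 1) := by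
      constructor
      · show ((0:ℝ)^3 - 8*0^2 + (24-16*κ)*0 - 16 + 16*κ) < 0; nlinarith
      · show (0:ℝ) < ((1:ℝ)^3 - 8*1^2 + (24-16*κ)*1 - 16 + 16*κ); nlinarith
    have hiv := intermediate_value_Ioo (by norm_num : (0:ℝ) ≤ 1) hQcont.continuousOn hmem
    obtain ⟨s₀, hs₀, hQ₀'⟩ := hiv
    have hQ₀ : s₀^3 - 8*s₀^2 + (24-16*κ)*s₀ - 16 + 16*κ = 0 := hQ₀'
    refine ⟨s₀, ⟨hs₀, rayleigh_Q_to_R κ s₀ hs₀.1 hs₀.2 (hks _ hs₀.1 hs₀.2) hQ₀⟩, ?_⟩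
    rintro s₁ ⟨hs₁, hR₁⟩
    have hQ₁ := rayleigh_R_to_Q κ s₁ hs₁.1 hs₁.2 (hks _ hs₁.1 hs₁.2) hR₁
    rcases lt_trichotomy s₁ s₀ with h | h | h
    · exact absurd (rayleigh_Q_uniq κ s₁ s₀ hs₁.1 hs₁.2 hs₀.1 hs₀.2 h hQ₁ hQ₀) not_false
    · exact h
    · exact absurd (rayleigh_Q_uniq κ s₀ s₁ hs₀.1 hs₀.2 hs₁.1 hs₁.2 h hQ₀ hQ₁) not_false
  · rintro s₀ ⟨h0, h1⟩ hR0
    exact rayleigh_deriv_ne κ s₀ hκ0 h0 h1 (hks _ h0 h1) hR0
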